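/- The probability measure μ on [0,π] with μ(A) = (1/2)∫_A sin(θ) dθ is invariant for the Feres random map: for every Borel set A ⊆ [0,π], μ(A) = Σ_{i=1}^4 ∫_{T_i^{-1}(A)} p_i(θ) dμ(θ). -/

import Mathlib

open Real MeasureTheory Set Filter Topology
open scoped ENNReal NNReal

noncomputable section

namespace RandomBilliard

/-- The four maps `T_1, …, T_4` of the Feres random map
(index `i : Fin 4` stands for `T_{i+1}`). -/
def T (α : ℝ) : Fin 4 → ℝ → ℝ
  | 0 => fun θ => θ + 2 * α
  | 1 => fun θ => -θ + 2 * π - 4 * α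
  | 2 => fun θ => θ - 2 * α
  | 3 => fun θ => -θ + 4 * α

/-- `u_a(θ) = (1/2)(1 + tan a / tan θ)`. -/
def u (a θ : ℝ) : ℝ := 1 / 2 * (1 + Real.tan a / Real.tan θ)

/-- The probabilities `p_1, …, p_4` of the Feres random map
(index `i : Fin 4` stands for `p_{i+1}`). -/
def p (α : ℝ) : Fin 4 → ℝ → ℝ
  | 0 => fun θ =>
      if θ < α then 1
      else if θ < π - 3 * α then u α θ
      else if θ < π - 2 * α then 2 * Real.cos (2 * α) * u (2 * α) θ
      else 0
  | 1 => fun θ =>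
      if θ < π - 3 * α then 0
      else if θ < π - 2 * α then u α θ - 2 * Real.cos (2 * α) * u (2 * α) θ
      else if θ < π - α then u α θ
      else 0
  | 2 => fun θ =>
      if θ < 2 * α then 0
      else if θ < 3 * α then 2 * Real.cos (2 * α) * u (2 * α) (-θ)
      else if θ < π - α then u α (-θ)
      else 1
  | 3 => fun θ =>
      if θ < α then 0
      else if θ < 2 * α then u α (-θ)
      else if θ < 3 * α then u α (-θ) - 2 * Real.cos (2 * α) * u (2 * α) (-θ)
      else 0

/-- `iterT α x k θ = T_x^{(k)}(θ) = T_{x_k} ∘ ⋯ ∘ T_{x_1}(θ)`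
(the term `x j : Fin 4` stands for the symbol `x_{j+1}`). -/
def iterT (α : ℝ) (x : ℕ → Fin 4) : ℕ → ℝ → ℝ
  | 0 => fun θ => θ
  | k + 1 => fun θ => T α (x k) (iterT α x k θ)

/-- `Σ_θ`: the admissible symbol sequences for `θ`, i.e. those whose every finite
prefix has positive probability. -/
def SigmaTheta (α θ : ℝ) : Set (ℕ → Fin 4) :=
  {x | ∀ k : ℕ, 0 < ∏ j ∈ Finset.range k, p α (x j) (iterT α x j θ)}

/-- `C(θ)`: all possible future images of `θ` under the Feres random map. -/
def Cset (α θ : ℝ) : Set ℝ :=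
  {θ' | θ' ∈ Set.Ioo 0 π ∧
    ∃ (x : ℕ → Fin 4) (k : ℕ), x ∈ SigmaTheta α θ ∧ iterT α x k θ = θ'}

/-- The probability measure `μ(A) = (1/2) ∫_A sin θ dθ` on `[0, π]`. -/
def mu0 : Measure ℝ :=
  (volume.restrict (Set.Icc 0 π)).withDensity fun θ => ENNReal.ofReal (1 / 2 * Real.sin θ)

/-- One step of the evolution of a measure under the Feres random map:
`(stepMeasure α ν)(A) = ∫ K(θ, A) dν(θ)`, where `K(θ, A) = Σ_i p_i(θ) 1_A(T_i θ)`. -/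
def stepMeasure (α : ℝ) (ν : Measure ℝ) : Measure ℝ :=
  ∑ i : Fin 4, Measure.map (T α i) (ν.withDensity fun θ => ENNReal.ofReal (p α i θ))

/-- One step of the evolution of a measure under the random billiard map in the circle
`F̄(s, θ) = (s + 2 T_i(θ) mod 2π, T_i(θ))` with probability `p_i(θ)`. -/
def circleStep (α : ℝ) (ν : Measure (ℝ × ℝ)) : Measure (ℝ × ℝ) :=
  ∑ i : Fin 4,
    Measure.map
      (fun q : ℝ × ℝ => (toIcoMod Real.two_pi_pos 0 (q.1 + 2 * T α i q.2), T α i q.2))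
      (ν.withDensity fun q => ENNReal.ofReal (p α i q.2))

/-- The transition kernel `K(θ', ·) = Σ_i p_i(θ') δ_{T_i(θ')}` of the Feres random map. -/
def feresKernel (α : ℝ) (t : ℝ) : Measure ℝ :=
  ∑ i : Fin 4, ENNReal.ofReal (p α i t) • Measure.dirac (T α i t)

/-- `k`-step iterates of a transition kernel. -/
def kerIterate (κ : ℝ → Measure ℝ) : ℕ → ℝ → Measure ℝ
  | 0 => fun t => Measure.dirac t
  | k + 1 => fun t => (κ t).bind (kerIterate κ k)

/-- The probability that a Markov chain with kernel `κ` started at `t` satisfies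
`θ_0 ∈ B 0, …, θ_n ∈ B n`. -/
def cylProb (κ : ℝ → Measure ℝ) : ℕ → (ℕ → Set ℝ) → ℝ → ℝ≥0∞
  | 0 => fun B t => Set.indicator (B 0) (fun _ => (1 : ℝ≥0∞)) t
  | n + 1 => fun B t =>
      Set.indicator (B 0)
        (fun _ => ∫⁻ t', cylProb κ n (fun k => B (k + 1)) t' ∂(κ t)) t

/-- `ν` is the Markov path measure on `ℕ → ℝ` (given by the Ionescu–Tulcea construction)
with initial distribution `ρ` and transition kernel `κ`, characterized by its values
on cylinder sets. -/
def IsMarkovPathMeasure (κ : ℝ → Measure ℝ) (ρ : Measure ℝ) (ν : Measure (ℕ → ℝ)) : Prop :=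
  ∀ (n : ℕ) (B : ℕ → Set ℝ), (∀ k, MeasurableSet (B k)) →
    ν {ω | ∀ k ≤ n, ω k ∈ B k} = ∫⁻ t, cylProb κ n B t ∂ρ

/-- The shift map on sequences. -/
def shift : (ℕ → ℝ) → ℕ → ℝ := fun ω n => ω (n + 1)

/-- Aperiodicity of the Markov chain with kernel `κ` on the state space `S`:
for every state, every common divisor of the return times having positive
probability equals `1` (i.e. every state has period 1). -/
def AperiodicChain (κ : ℝ → Measure ℝ) (S : Set ℝ) : Prop :=
  ∀ t ∈ S, ∀ d : ℕ, (∀ k : ℕ, 1 ≤ k → 0 < kerIterate κ k t {t} → d ∣ k) → d = 1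

end RandomBilliard

open RandomBilliard


section FeresAux

open RandomBilliard

private lemma measurable_tan : Measurable Real.tan := by
  have h : Real.tan = fun x => Real.sin x / Real.cos x := funext fun x => Real.tan_eq_sin_div_cos x
  rw [h]
  exact Real.continuous_sin.measurable.div Real.continuous_cos.measurable

private lemma measurable_u (a : ℝ) : Measurable (u a) := by
  unfold u
  exact ((measurable_const.add (measurable_const.div measurable_tan))).const_mul _

private lemma measurable_p (α : ℝ) (i : Fin 4) : Measurable (p α i) := by
  have h1 : Measurable (u α) := measurable_u α
  have h2 : Measurable (u (2 * α)) := measurable_u (2 * α)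
  have h1' : Measurable fun θ : ℝ => u α (-θ) := h1.comp measurable_neg
  have h2' : Measurable fun θ : ℝ => u (2 * α) (-θ) := h2.comp measurable_neg
  fin_cases i
  · exact Measurable.ite measurableSet_Iio measurable_const
      (Measurable.ite measurableSet_Iio h1
        (Measurable.ite measurableSet_Iio (h2.const_mul _) measurable_const))
  · exact Measurable.ite measurableSet_Iio measurable_const
      (Measurable.ite measurableSet_Iio (h1.sub (h2.const_mul _))
        (Measurable.ite measurableSet_Iio h1 measurable_const))
  · exact Measurable.ite measurableSet_Iio measurable_const
      (Measurable.ite measurableSet_Iio (h2'.const_mul _)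
        (Measurable.ite measurableSet_Iio h1' measurable_const))
  · exact Measurable.ite measurableSet_Iio measurable_const
      (Measurable.ite measurableSet_Iio h1'
        (Measurable.ite measurableSet_Iio (h1'.sub (h2'.const_mul _)) measurable_const))

/-- the inverse maps of the `T i`. -/
private def gmap (α : ℝ) : Fin 4 → ℝ → ℝ
  | 0 => fun φ => φ - 2 * α
  | 1 => fun φ => -φ + 2 * π - 4 * α
  | 2 => fun φ => φ + 2 * α
  | 3 => fun φ => -φ + 4 * α

private lemma gmap0 (α : ℝ) : gmap α 0 = fun φ => φ - 2 * α := rfl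
private lemma gmap1 (α : ℝ) : gmap α 1 = fun φ => -φ + 2 * π - 4 * α := rfl
private lemma gmap2 (α : ℝ) : gmap α 2 = fun φ => φ + 2 * α := rfl
private lemma gmap3 (α : ℝ) : gmap α 3 = fun φ => -φ + 4 * α := rfl

private lemma gmap_T (α : ℝ) (i : Fin 4) (θ : ℝ) : gmap α i (T α i θ) = θ := by
  fin_cases i <;> simp only [gmap, T] <;> ring

private lemma measurable_gmap (α : ℝ) (i : Fin 4) : Measurable (gmap α i) := by
  fin_cases i
  · exact measurable_id.sub_const _
  · exact (measurable_id.neg.add_const _).sub_const _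
  · exact measurable_id.add_const _
  · exact measurable_id.neg.add_const _

private lemma measurePreserving_T (α : ℝ) (i : Fin 4) :
    MeasurePreserving (T α i) volume volume := by
  fin_cases i
  · exact measurePreserving_add_right volume (2 * α)
  · show MeasurePreserving (fun θ : ℝ => -θ + 2 * π - 4 * α) volume volume
    have h : (fun θ : ℝ => -θ + 2 * π - 4 * α)
        = (fun y : ℝ => y + (2 * π - 4 * α)) ∘ fun θ : ℝ => -θ := by
      funext θ; simp only [Function.comp_apply]; ring
    rw [h]
    exact (measurePreserving_add_right volume (2 * π - 4 * α)).comp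
      (Measure.measurePreserving_neg volume)
  · exact measurePreserving_sub_right volume (2 * α)
  · show MeasurePreserving (fun θ : ℝ => -θ + 4 * α) volume volume
    have h : (fun θ : ℝ => -θ + 4 * α)
        = (fun y : ℝ => y + 4 * α) ∘ fun θ : ℝ => -θ := by
      funext θ; simp only [Function.comp_apply]
    rw [h]
    exact (measurePreserving_add_right volume (4 * α)).comp
      (Measure.measurePreserving_neg volume)

/- branch unfolding lemmas for `p` -/
private lemma p0_def (α θ : ℝ) : p α 0 θ =
    if θ < α then 1
    else if θ < π - 3 * α then u α θ
    else if θ < π - 2 * α then 2 * Real.cos (2 * α) * u (2 * α) θ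
    else 0 := rfl

private lemma p1_def (α θ : ℝ) : p α 1 θ =
    if θ < π - 3 * α then 0
    else if θ < π - 2 * α then u α θ - 2 * Real.cos (2 * α) * u (2 * α) θ
    else if θ < π - α then u α θ
    else 0 := rfl

private lemma p2_def (α θ : ℝ) : p α 2 θ =
    if θ < 2 * α then 0
    else if θ < 3 * α then 2 * Real.cos (2 * α) * u (2 * α) (-θ)
    else if θ < π - α then u α (-θ)
    else 1 := rfl

private lemma p3_def (α θ : ℝ) : p α 3 θ =
    if θ < α then 0
    else if θ < 2 * α then u α (-θ)
    else if θ < 3 * α then u α (-θ) - 2 * Real.cos (2 * α) * u (2 * α) (-θ)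
    else 0 := rfl

/- the key product identities -/
private lemma u_sin {a θ : ℝ} (hca : Real.cos a ≠ 0) (hs : Real.sin θ ≠ 0)
    (hc : Real.cos θ ≠ 0) :
    2 * Real.cos a * (u a θ * Real.sin θ) = Real.sin (θ + a) := by
  unfold u
  simp only [Real.tan_eq_sin_div_cos]
  rw [Real.sin_add]
  field_simp

private lemma u_neg_sin {a θ : ℝ} (hca : Real.cos a ≠ 0) (hs : Real.sin θ ≠ 0)
    (hc : Real.cos θ ≠ 0) :
    2 * Real.cos a * (u a (-θ) * Real.sin θ) = Real.sin (θ - a) := by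
  unfold u
  simp only [Real.tan_neg, Real.tan_eq_sin_div_cos]
  rw [Real.sin_sub]
  field_simp
  rw [Real.cos_neg, Real.sin_neg]
  field_simp
  ring

/- nonnegativity lemmas -/
private lemma cos_ne_zero_of_Ioo {θ : ℝ} (h0 : 0 < θ) (hπ : θ < π) (hne : θ ≠ π / 2) :
    Real.cos θ ≠ 0 := by
  rcases lt_or_gt_of_ne hne with h | h
  · exact ne_of_gt (Real.cos_pos_of_mem_Ioo ⟨by linarith [Real.pi_pos], h⟩)
  · exact ne_of_lt (Real.cos_neg_of_pi_div_two_lt_of_lt h (by linarith [Real.pi_pos]))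

private lemma tan_pi_sub' (θ : ℝ) : Real.tan (π - θ) = -Real.tan θ := by
  simp only [Real.tan_eq_sin_div_cos, Real.sin_pi_sub, Real.cos_pi_sub, div_neg]

private lemma u_nonneg {a θ : ℝ} (ha0 : 0 < a) (ha : a < π / 2) (h0 : 0 < θ)
    (hθ : θ < π - a) (hne : θ ≠ π / 2) : 0 ≤ u a θ := by
  have hta : 0 < Real.tan a := Real.tan_pos_of_pos_of_lt_pi_div_two ha0 ha
  rcases lt_or_gt_of_ne hne with h | h
  · have htθ : 0 < Real.tan θ := Real.tan_pos_of_pos_of_lt_pi_div_two h0 h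
    have hd : 0 ≤ Real.tan a / Real.tan θ := le_of_lt (div_pos hta htθ)
    unfold u; linarith
  · have hsθ : 0 < Real.sin θ := Real.sin_pos_of_pos_of_lt_pi h0 (by linarith)
    have hcθ : Real.cos θ < 0 :=
      Real.cos_neg_of_pi_div_two_lt_of_lt h (by linarith [Real.pi_pos])
    have htθ : Real.tan θ < 0 := by
      rw [Real.tan_eq_sin_div_cos]; exact div_neg_of_pos_of_neg hsθ hcθ
    have hmono : Real.tan a < Real.tan (π - θ) :=
      Real.tan_lt_tan_of_nonneg_of_lt_pi_div_two (le_of_lt ha0) (by linarith) (by linarith)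
    rw [tan_pi_sub'] at hmono
    have h2 : Real.tan a / (-Real.tan θ) < 1 := (div_lt_one (by linarith)).mpr (by linarith)
    rw [div_neg] at h2
    have h1 : -1 < Real.tan a / Real.tan θ := by linarith
    unfold u; linarith

private lemma u_neg_nonneg {a θ : ℝ} (ha0 : 0 < a) (ha : a < π / 2) (haθ : a ≤ θ)
    (hθ : θ < π) (hne : θ ≠ π / 2) : 0 ≤ u a (-θ) := by
  have hta : 0 < Real.tan a := Real.tan_pos_of_pos_of_lt_pi_div_two ha0 ha
  unfold u
  rw [Real.tan_neg]
  rcases lt_or_gt_of_ne hne with h | h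
  · have htθ : Real.tan a ≤ Real.tan θ := by
      rcases eq_or_lt_of_le haθ with rfl | hlt
      · exact le_refl _
      · exact le_of_lt (Real.tan_lt_tan_of_nonneg_of_lt_pi_div_two (le_of_lt ha0) h hlt)
    have htθ0 : 0 < Real.tan θ := Real.tan_pos_of_pos_of_lt_pi_div_two (by linarith) h
    have hd : Real.tan a / Real.tan θ ≤ 1 := (div_le_one htθ0).mpr htθ
    rw [div_neg]
    linarith
  · have hsθ : 0 < Real.sin θ := Real.sin_pos_of_pos_of_lt_pi (by linarith) hθ
    have hcθ : Real.cos θ < 0 :=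
      Real.cos_neg_of_pi_div_two_lt_of_lt h (by linarith [Real.pi_pos])
    have htθ : Real.tan θ < 0 := by
      rw [Real.tan_eq_sin_div_cos]; exact div_neg_of_pos_of_neg hsθ hcθ
    have hd : Real.tan a / Real.tan θ < 0 := div_neg_of_pos_of_neg hta htθ
    rw [div_neg]
    linarith

/- clean trig identities -/
private lemma CL2 (α φ : ℝ) :
    1 / 2 * Real.sin (φ + α) + 1 / 2 * Real.sin (3 * α - φ)
      - Real.cos α * Real.sin (2 * α - φ) = Real.cos α * Real.sin φ := by
  simp only [show (3 : ℝ) * α = 2 * α + α by ring, Real.sin_add, Real.cos_add, Real.sin_sub,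
    Real.cos_sub, Real.sin_two_mul, Real.cos_two_mul]
  linear_combination (Real.sin φ * Real.cos α) * Real.sin_sq_add_cos_sq α

private lemma CL3 (α φ : ℝ) :
    Real.cos α * Real.sin (φ - 2 * α) + 1 / 2 * Real.sin (φ + α)
      + 1 / 2 * Real.sin (3 * α - φ) = Real.cos α * Real.sin φ := by
  simp only [show (3 : ℝ) * α = 2 * α + α by ring, Real.sin_add, Real.cos_add, Real.sin_sub,
    Real.cos_sub, Real.sin_two_mul, Real.cos_two_mul]
  linear_combination (Real.sin φ * Real.cos α) * Real.sin_sq_add_cos_sq α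

private lemma CL4 (α φ : ℝ) :
    1 / 2 * Real.sin (φ - α) + 1 / 2 * Real.sin (φ + α) = Real.cos α * Real.sin φ := by
  rw [Real.sin_sub, Real.sin_add]; ring

private lemma CL5 (α φ : ℝ) :
    1 / 2 * Real.sin (φ - α) + 1 / 2 * Real.sin (2 * π - (φ + 3 * α))
      + Real.cos α * Real.sin (φ + 2 * α) = Real.cos α * Real.sin φ := by
  simp only [show (3 : ℝ) * α = 2 * α + α by ring, Real.sin_add, Real.cos_add, Real.sin_sub,
    Real.cos_sub, Real.sin_two_mul, Real.cos_two_mul, Real.sin_two_pi, Real.cos_two_pi,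
    Real.sin_pi, Real.cos_pi]
  linear_combination (Real.sin φ * Real.cos α) * Real.sin_sq_add_cos_sq α

private lemma CL6 (α φ : ℝ) :
    1 / 2 * Real.sin (φ - α) + 1 / 2 * Real.sin (2 * π - (φ + 3 * α))
      - Real.cos α * Real.sin (2 * π - (φ + 2 * α)) = Real.cos α * Real.sin φ := by
  simp only [show (3 : ℝ) * α = 2 * α + α by ring, Real.sin_add, Real.cos_add, Real.sin_sub,
    Real.cos_sub, Real.sin_two_mul, Real.cos_two_mul, Real.sin_two_pi, Real.cos_two_pi,
    Real.sin_pi, Real.cos_pi]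
  linear_combination (Real.sin φ * Real.cos α) * Real.sin_sq_add_cos_sq α

private lemma CLc2 (α θ : ℝ) :
    Real.sin (θ + α) - 2 * Real.cos α * Real.sin (θ + 2 * α) = -Real.sin (θ + 3 * α) := by
  simp only [show (3 : ℝ) * α = 2 * α + α by ring, Real.sin_add, Real.cos_add,
    Real.sin_two_mul, Real.cos_two_mul]
  linear_combination (-2 * Real.sin θ * Real.cos α) * Real.sin_sq_add_cos_sq α

private lemma CLc4 (α θ : ℝ) :
    Real.sin (θ - α) - 2 * Real.cos α * Real.sin (θ - 2 * α) = -Real.sin (θ - 3 * α) := by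
  simp only [show (3 : ℝ) * α = 2 * α + α by ring, Real.sin_add, Real.cos_add, Real.sin_sub,
    Real.cos_sub, Real.sin_two_mul, Real.cos_two_mul]
  linear_combination (-2 * Real.sin θ * Real.cos α) * Real.sin_sq_add_cos_sq α

private lemma combo2_nonneg {α θ : ℝ} (hα0 : 0 < α) (hα6 : α < π / 6)
    (h1 : π - 3 * α < θ) (h2 : θ < π - 2 * α) :
    0 ≤ u α θ - 2 * Real.cos (2 * α) * u (2 * α) θ := by
  have hπ := Real.pi_pos
  have h6 : 6 * α < π := by linarith
  have hca : 0 < Real.cos α := Real.cos_pos_of_mem_Ioo ⟨by linarith, by linarith⟩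
  have hc2 : 0 < Real.cos (2 * α) := Real.cos_pos_of_mem_Ioo ⟨by linarith, by linarith⟩
  have hs : 0 < Real.sin θ := Real.sin_pos_of_pos_of_lt_pi (by linarith) (by linarith)
  have hcθ : Real.cos θ < 0 :=
    Real.cos_neg_of_pi_div_two_lt_of_lt (by linarith) (by linarith)
  have k1 := u_sin (a := α) (θ := θ) (ne_of_gt hca) (ne_of_gt hs) (ne_of_lt hcθ)
  have k2 := u_sin (a := 2 * α) (θ := θ) (ne_of_gt hc2) (ne_of_gt hs) (ne_of_lt hcθ)
  have hh : 0 ≤ Real.sin (θ + 3 * α - π) :=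
    Real.sin_nonneg_of_nonneg_of_le_pi (by linarith) (by linarith)
  rw [Real.sin_sub_pi] at hh
  have key : (u α θ - 2 * Real.cos (2 * α) * u (2 * α) θ) * Real.sin θ * (2 * Real.cos α)
      = -Real.sin (θ + 3 * α) := by
    linear_combination k1 - 2 * Real.cos α * k2 + CLc2 α θ
  nlinarith [mul_pos hs (by linarith : (0:ℝ) < 2 * Real.cos α)]

private lemma combo4_nonneg {α θ : ℝ} (hα0 : 0 < α) (hα6 : α < π / 6)
    (h1 : 2 * α < θ) (h2 : θ < 3 * α) :
    0 ≤ u α (-θ) - 2 * Real.cos (2 * α) * u (2 * α) (-θ) := by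
  have hπ := Real.pi_pos
  have h6 : 6 * α < π := by linarith
  have hca : 0 < Real.cos α := Real.cos_pos_of_mem_Ioo ⟨by linarith, by linarith⟩
  have hc2 : 0 < Real.cos (2 * α) := Real.cos_pos_of_mem_Ioo ⟨by linarith, by linarith⟩
  have hs : 0 < Real.sin θ := Real.sin_pos_of_pos_of_lt_pi (by linarith) (by linarith)
  have hcθ : 0 < Real.cos θ := Real.cos_pos_of_mem_Ioo ⟨by linarith, by linarith⟩
  have k1 := u_neg_sin (a := α) (θ := θ) (ne_of_gt hca) (ne_of_gt hs) (ne_of_gt hcθ)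
  have k2 := u_neg_sin (a := 2 * α) (θ := θ) (ne_of_gt hc2) (ne_of_gt hs) (ne_of_gt hcθ)
  have hh : Real.sin (θ - 3 * α) ≤ 0 :=
    Real.sin_nonpos_of_nonpos_of_neg_pi_le (by linarith) (by linarith)
  have key : (u α (-θ) - 2 * Real.cos (2 * α) * u (2 * α) (-θ)) * Real.sin θ * (2 * Real.cos α)
      = -Real.sin (θ - 3 * α) := by
    linear_combination k1 - 2 * Real.cos α * k2 + CLc4 α θ
  nlinarith [mul_pos hs (by linarith : (0:ℝ) < 2 * Real.cos α)]

set_option maxHeartbeats 2000000 in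
/-- The pointwise identity at the heart of the invariance proof. -/
private lemma feres_key (α φ : ℝ) (hα0 : 0 < α) (hα6 : α < π / 6)
    (h0 : 0 < φ) (hπφ : φ < π)
    (e1 : φ ≠ α) (e2 : φ ≠ 2 * α) (e3 : φ ≠ 3 * α) (e4 : φ ≠ 4 * α)
    (e5 : φ ≠ π - 4 * α) (e6 : φ ≠ π - 3 * α) (e7 : φ ≠ π - 2 * α) (e8 : φ ≠ π - α)
    (e9 : φ ≠ π / 2 + 2 * α) (e10 : φ ≠ π / 2 - 2 * α) :
    (Set.Icc 0 π).indicator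
        (fun θ => ENNReal.ofReal (1 / 2 * Real.sin θ) * ENNReal.ofReal (p α 0 θ)) (φ - 2 * α)
      + (Set.Icc 0 π).indicator
        (fun θ => ENNReal.ofReal (1 / 2 * Real.sin θ) * ENNReal.ofReal (p α 1 θ))
          (-φ + 2 * π - 4 * α)
      + (Set.Icc 0 π).indicator
        (fun θ => ENNReal.ofReal (1 / 2 * Real.sin θ) * ENNReal.ofReal (p α 2 θ)) (φ + 2 * α)
      + (Set.Icc 0 π).indicator
        (fun θ => ENNReal.ofReal (1 / 2 * Real.sin θ) * ENNReal.ofReal (p α 3 θ)) (-φ + 4 * α)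
      = ENNReal.ofReal (1 / 2 * Real.sin φ) := by
  have hπ := Real.pi_pos
  have h6 : 6 * α < π := by linarith
  have hca : 0 < Real.cos α := Real.cos_pos_of_mem_Ioo ⟨by linarith, by linarith⟩
  have hc2 : 0 < Real.cos (2 * α) := Real.cos_pos_of_mem_Ioo ⟨by linarith, by linarith⟩
  have h2ca : (2 : ℝ) * Real.cos α ≠ 0 := ne_of_gt (by linarith)
  rcases lt_or_gt_of_ne e1 with hr1 | hr1
  · -- Region R1 : 0 < φ < α
    have hn1 : (φ - 2 * α) ∉ Set.Icc (0:ℝ) π := fun hmem => by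
      rw [Set.mem_Icc] at hmem; linarith [hmem.1]
    have hn2 : (-φ + 2 * π - 4 * α) ∉ Set.Icc (0:ℝ) π := fun hmem => by
      rw [Set.mem_Icc] at hmem; linarith [hmem.2]
    have hm3 : φ + 2 * α ∈ Set.Icc (0:ℝ) π := ⟨by linarith, by linarith⟩
    have hm4 : -φ + 4 * α ∈ Set.Icc (0:ℝ) π := ⟨by linarith, by linarith⟩
    have P3 : p α 2 (φ + 2 * α) = 2 * Real.cos (2 * α) * u (2 * α) (-(φ + 2 * α)) := by
      rw [p2_def, if_neg (by linarith), if_pos (by linarith)]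
    have P4 : p α 3 (-φ + 4 * α) = 0 := by
      rw [p3_def, if_neg (by linarith), if_neg (by linarith), if_neg (by linarith)]
    simp only [Set.indicator_of_notMem hn1, Set.indicator_of_notMem hn2,
      Set.indicator_of_mem hm3, Set.indicator_of_mem hm4, P3, P4, ENNReal.ofReal_zero,
      mul_zero, zero_add, add_zero]
    have hs3 : 0 < Real.sin (φ + 2 * α) :=
      Real.sin_pos_of_pos_of_lt_pi (by linarith) (by linarith)
    have hc3 : 0 < Real.cos (φ + 2 * α) := Real.cos_pos_of_mem_Ioo ⟨by linarith, by linarith⟩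
    have hv : 0 ≤ 2 * Real.cos (2 * α) * u (2 * α) (-(φ + 2 * α)) :=
      mul_nonneg (by linarith)
        (u_neg_nonneg (by linarith) (by linarith) (by linarith) (by linarith)
          (ne_of_lt (by linarith)))
    have hs3nn : 0 ≤ 1 / 2 * Real.sin (φ + 2 * α) := by linarith
    rw [← ENNReal.ofReal_mul hs3nn]
    refine congrArg ENNReal.ofReal ?_
    have t := u_neg_sin (a := 2 * α) (θ := φ + 2 * α) (ne_of_gt hc2) (ne_of_gt hs3)
      (ne_of_gt hc3)
    rw [show φ + 2 * α - 2 * α = φ by ring] at t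
    linear_combination (1 / 2 : ℝ) * t
  rcases lt_or_gt_of_ne e2 with hr2 | hr2
  · -- Region R2 : α < φ < 2α
    have hn1 : (φ - 2 * α) ∉ Set.Icc (0:ℝ) π := fun hmem => by
      rw [Set.mem_Icc] at hmem; linarith [hmem.1]
    have hn2 : (-φ + 2 * π - 4 * α) ∉ Set.Icc (0:ℝ) π := fun hmem => by
      rw [Set.mem_Icc] at hmem; linarith [hmem.2]
    have hm3 : φ + 2 * α ∈ Set.Icc (0:ℝ) π := ⟨by linarith, by linarith⟩
    have hm4 : -φ + 4 * α ∈ Set.Icc (0:ℝ) π := ⟨by linarith, by linarith⟩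
    have P3 : p α 2 (φ + 2 * α) = u α (-(φ + 2 * α)) := by
      rw [p2_def, if_neg (by linarith), if_neg (by linarith), if_pos (by linarith)]
    have P4 : p α 3 (-φ + 4 * α)
        = u α (-(-φ + 4 * α)) - 2 * Real.cos (2 * α) * u (2 * α) (-(-φ + 4 * α)) := by
      rw [p3_def, if_neg (by linarith), if_neg (by linarith), if_pos (by linarith)]
    simp only [Set.indicator_of_notMem hn1, Set.indicator_of_notMem hn2,
      Set.indicator_of_mem hm3, Set.indicator_of_mem hm4, P3, P4, zero_add]
    have hs3 : 0 < Real.sin (φ + 2 * α) :=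
      Real.sin_pos_of_pos_of_lt_pi (by linarith) (by linarith)
    have hc3 : Real.cos (φ + 2 * α) ≠ 0 :=
      cos_ne_zero_of_Ioo (by linarith) (by linarith) (fun h => e10 (by linarith))
    have hs4 : 0 < Real.sin (-φ + 4 * α) :=
      Real.sin_pos_of_pos_of_lt_pi (by linarith) (by linarith)
    have hc4 : 0 < Real.cos (-φ + 4 * α) := Real.cos_pos_of_mem_Ioo ⟨by linarith, by linarith⟩
    have hv3 : 0 ≤ u α (-(φ + 2 * α)) :=
      u_neg_nonneg hα0 (by linarith) (by linarith) (by linarith) (fun h => e10 (by linarith))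
    have hv4 : 0 ≤ u α (-(-φ + 4 * α)) - 2 * Real.cos (2 * α) * u (2 * α) (-(-φ + 4 * α)) :=
      combo4_nonneg hα0 hα6 (by linarith) (by linarith)
    have hs3nn : 0 ≤ 1 / 2 * Real.sin (φ + 2 * α) := by linarith
    have hs4nn : 0 ≤ 1 / 2 * Real.sin (-φ + 4 * α) := by linarith
    rw [← ENNReal.ofReal_mul hs3nn, ← ENNReal.ofReal_mul hs4nn,
      ← ENNReal.ofReal_add (mul_nonneg hs3nn hv3) (mul_nonneg hs4nn hv4)]
    refine congrArg ENNReal.ofReal ?_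
    have t3 := u_neg_sin (a := α) (θ := φ + 2 * α) (ne_of_gt hca) (ne_of_gt hs3) hc3
    rw [show φ + 2 * α - α = φ + α by ring] at t3
    have t4a := u_neg_sin (a := α) (θ := -φ + 4 * α) (ne_of_gt hca) (ne_of_gt hs4)
      (ne_of_gt hc4)
    rw [show -φ + 4 * α - α = 3 * α - φ by ring] at t4a
    have t4b := u_neg_sin (a := 2 * α) (θ := -φ + 4 * α) (ne_of_gt hc2) (ne_of_gt hs4)
      (ne_of_gt hc4)
    rw [show -φ + 4 * α - 2 * α = 2 * α - φ by ring] at t4b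
    apply mul_left_cancel₀ h2ca
    linear_combination (1 / 2 : ℝ) * t3 + (1 / 2 : ℝ) * t4a - Real.cos α * t4b + CL2 α φ
  rcases lt_or_gt_of_ne e3 with hr3 | hr3
  · -- Region R3 : 2α < φ < 3α
    have hm1 : φ - 2 * α ∈ Set.Icc (0:ℝ) π := ⟨by linarith, by linarith⟩
    have hm3 : φ + 2 * α ∈ Set.Icc (0:ℝ) π := ⟨by linarith, by linarith⟩
    have hm4 : -φ + 4 * α ∈ Set.Icc (0:ℝ) π := ⟨by linarith, by linarith⟩
    have P1 : p α 0 (φ - 2 * α) = 1 := by rw [p0_def, if_pos (by linarith)]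
    have P3 : p α 2 (φ + 2 * α) = u α (-(φ + 2 * α)) := by
      rw [p2_def, if_neg (by linarith), if_neg (by linarith), if_pos (by linarith)]
    have P4 : p α 3 (-φ + 4 * α) = u α (-(-φ + 4 * α)) := by
      rw [p3_def, if_neg (by linarith), if_pos (by linarith)]
    have hI2 : (Set.Icc 0 π).indicator
        (fun θ => ENNReal.ofReal (1 / 2 * Real.sin θ) * ENNReal.ofReal (p α 1 θ))
        (-φ + 2 * π - 4 * α) = 0 := by
      by_cases h5 : φ < π - 4 * α
      · exact Set.indicator_of_notMem (fun hmem => by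
          rw [Set.mem_Icc] at hmem; linarith [hmem.2]) _
      · push_neg at h5
        have h5' : π - 4 * α < φ := lt_of_le_of_ne h5 (Ne.symm e5)
        have hm2 : -φ + 2 * π - 4 * α ∈ Set.Icc (0:ℝ) π := ⟨by linarith, by linarith⟩
        have P2 : p α 1 (-φ + 2 * π - 4 * α) = 0 := by
          rw [p1_def, if_neg (by linarith), if_neg (by linarith), if_neg (by linarith)]
        simp only [Set.indicator_of_mem hm2, P2, ENNReal.ofReal_zero, mul_zero]
    simp only [Set.indicator_of_mem hm1, Set.indicator_of_mem hm3, Set.indicator_of_mem hm4,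
      hI2, P1, P3, P4, ENNReal.ofReal_one, mul_one, add_zero]
    have hs1 : 0 < Real.sin (φ - 2 * α) :=
      Real.sin_pos_of_pos_of_lt_pi (by linarith) (by linarith)
    have hs3 : 0 < Real.sin (φ + 2 * α) :=
      Real.sin_pos_of_pos_of_lt_pi (by linarith) (by linarith)
    have hc3 : Real.cos (φ + 2 * α) ≠ 0 :=
      cos_ne_zero_of_Ioo (by linarith) (by linarith) (fun h => e10 (by linarith))
    have hs4 : 0 < Real.sin (-φ + 4 * α) :=
      Real.sin_pos_of_pos_of_lt_pi (by linarith) (by linarith)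
    have hc4 : 0 < Real.cos (-φ + 4 * α) := Real.cos_pos_of_mem_Ioo ⟨by linarith, by linarith⟩
    have hv3 : 0 ≤ u α (-(φ + 2 * α)) :=
      u_neg_nonneg hα0 (by linarith) (by linarith) (by linarith) (fun h => e10 (by linarith))
    have hv4 : 0 ≤ u α (-(-φ + 4 * α)) :=
      u_neg_nonneg hα0 (by linarith) (by linarith) (by linarith) (ne_of_lt (by linarith))
    have hs1nn : 0 ≤ 1 / 2 * Real.sin (φ - 2 * α) := by linarith
    have hs3nn : 0 ≤ 1 / 2 * Real.sin (φ + 2 * α) := by linarith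
    have hs4nn : 0 ≤ 1 / 2 * Real.sin (-φ + 4 * α) := by linarith
    rw [← ENNReal.ofReal_mul hs3nn, ← ENNReal.ofReal_mul hs4nn,
      ← ENNReal.ofReal_add hs1nn (mul_nonneg hs3nn hv3),
      ← ENNReal.ofReal_add (add_nonneg hs1nn (mul_nonneg hs3nn hv3)) (mul_nonneg hs4nn hv4)]
    refine congrArg ENNReal.ofReal ?_
    have t3 := u_neg_sin (a := α) (θ := φ + 2 * α) (ne_of_gt hca) (ne_of_gt hs3) hc3
    rw [show φ + 2 * α - α = φ + α by ring] at t3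
    have t4 := u_neg_sin (a := α) (θ := -φ + 4 * α) (ne_of_gt hca) (ne_of_gt hs4)
      (ne_of_gt hc4)
    rw [show -φ + 4 * α - α = 3 * α - φ by ring] at t4
    apply mul_left_cancel₀ h2ca
    linear_combination (1 / 2 : ℝ) * t3 + (1 / 2 : ℝ) * t4 + CL3 α φ
  rcases lt_or_gt_of_ne e6 with hr4 | hr4
  · -- Region R4 : 3α < φ < π - 3α
    have hm1 : φ - 2 * α ∈ Set.Icc (0:ℝ) π := ⟨by linarith, by linarith⟩
    have hm3 : φ + 2 * α ∈ Set.Icc (0:ℝ) π := ⟨by linarith, by linarith⟩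
    have P1 : p α 0 (φ - 2 * α) = u α (φ - 2 * α) := by
      rw [p0_def, if_neg (by linarith), if_pos (by linarith)]
    have P3 : p α 2 (φ + 2 * α) = u α (-(φ + 2 * α)) := by
      rw [p2_def, if_neg (by linarith), if_neg (by linarith), if_pos (by linarith)]
    have hI2 : (Set.Icc 0 π).indicator
        (fun θ => ENNReal.ofReal (1 / 2 * Real.sin θ) * ENNReal.ofReal (p α 1 θ))
        (-φ + 2 * π - 4 * α) = 0 := by
      by_cases h5 : φ < π - 4 * α
      · exact Set.indicator_of_notMem (fun hmem => by
          rw [Set.mem_Icc] at hmem; linarith [hmem.2]) _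
      · push_neg at h5
        have h5' : π - 4 * α < φ := lt_of_le_of_ne h5 (Ne.symm e5)
        have hm2 : -φ + 2 * π - 4 * α ∈ Set.Icc (0:ℝ) π := ⟨by linarith, by linarith⟩
        have P2 : p α 1 (-φ + 2 * π - 4 * α) = 0 := by
          rw [p1_def, if_neg (by linarith), if_neg (by linarith), if_neg (by linarith)]
        simp only [Set.indicator_of_mem hm2, P2, ENNReal.ofReal_zero, mul_zero]
    have hI4 : (Set.Icc 0 π).indicator
        (fun θ => ENNReal.ofReal (1 / 2 * Real.sin θ) * ENNReal.ofReal (p α 3 θ))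
        (-φ + 4 * α) = 0 := by
      by_cases h5 : 4 * α < φ
      · exact Set.indicator_of_notMem (fun hmem => by
          rw [Set.mem_Icc] at hmem; linarith [hmem.1]) _
      · push_neg at h5
        have h5' : φ < 4 * α := lt_of_le_of_ne h5 e4
        have hm4 : -φ + 4 * α ∈ Set.Icc (0:ℝ) π := ⟨by linarith, by linarith⟩
        have P4 : p α 3 (-φ + 4 * α) = 0 := by rw [p3_def, if_pos (by linarith)]
        simp only [Set.indicator_of_mem hm4, P4, ENNReal.ofReal_zero, mul_zero]
    simp only [Set.indicator_of_mem hm1, Set.indicator_of_mem hm3, hI2, hI4, P1, P3,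
      add_zero]
    have hs1 : 0 < Real.sin (φ - 2 * α) :=
      Real.sin_pos_of_pos_of_lt_pi (by linarith) (by linarith)
    have hc1 : Real.cos (φ - 2 * α) ≠ 0 :=
      cos_ne_zero_of_Ioo (by linarith) (by linarith) (fun h => e9 (by linarith))
    have hs3 : 0 < Real.sin (φ + 2 * α) :=
      Real.sin_pos_of_pos_of_lt_pi (by linarith) (by linarith)
    have hc3 : Real.cos (φ + 2 * α) ≠ 0 :=
      cos_ne_zero_of_Ioo (by linarith) (by linarith) (fun h => e10 (by linarith))
    have hv1 : 0 ≤ u α (φ - 2 * α) :=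
      u_nonneg hα0 (by linarith) (by linarith) (by linarith) (fun h => e9 (by linarith))
    have hv3 : 0 ≤ u α (-(φ + 2 * α)) :=
      u_neg_nonneg hα0 (by linarith) (by linarith) (by linarith) (fun h => e10 (by linarith))
    have hs1nn : 0 ≤ 1 / 2 * Real.sin (φ - 2 * α) := by linarith
    have hs3nn : 0 ≤ 1 / 2 * Real.sin (φ + 2 * α) := by linarith
    rw [← ENNReal.ofReal_mul hs1nn, ← ENNReal.ofReal_mul hs3nn,
      ← ENNReal.ofReal_add (mul_nonneg hs1nn hv1) (mul_nonneg hs3nn hv3)]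
    refine congrArg ENNReal.ofReal ?_
    have t1 := u_sin (a := α) (θ := φ - 2 * α) (ne_of_gt hca) (ne_of_gt hs1) hc1
    rw [show φ - 2 * α + α = φ - α by ring] at t1
    have t3 := u_neg_sin (a := α) (θ := φ + 2 * α) (ne_of_gt hca) (ne_of_gt hs3) hc3
    rw [show φ + 2 * α - α = φ + α by ring] at t3
    apply mul_left_cancel₀ h2ca
    linear_combination (1 / 2 : ℝ) * t1 + (1 / 2 : ℝ) * t3 + CL4 α φ
  rcases lt_or_gt_of_ne e7 with hr5 | hr5
  · -- Region R5 : π - 3α < φ < π - 2α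
    have hm1 : φ - 2 * α ∈ Set.Icc (0:ℝ) π := ⟨by linarith, by linarith⟩
    have hm2 : -φ + 2 * π - 4 * α ∈ Set.Icc (0:ℝ) π := ⟨by linarith, by linarith⟩
    have hm3 : φ + 2 * α ∈ Set.Icc (0:ℝ) π := ⟨by linarith, by linarith⟩
    have P1 : p α 0 (φ - 2 * α) = u α (φ - 2 * α) := by
      rw [p0_def, if_neg (by linarith), if_pos (by linarith)]
    have P2 : p α 1 (-φ + 2 * π - 4 * α) = u α (-φ + 2 * π - 4 * α) := by
      rw [p1_def, if_neg (by linarith), if_neg (by linarith), if_pos (by linarith)]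
    have P3 : p α 2 (φ + 2 * α) = 1 := by
      rw [p2_def, if_neg (by linarith), if_neg (by linarith), if_neg (by linarith)]
    have hI4 : (Set.Icc 0 π).indicator
        (fun θ => ENNReal.ofReal (1 / 2 * Real.sin θ) * ENNReal.ofReal (p α 3 θ))
        (-φ + 4 * α) = 0 := by
      by_cases h5 : 4 * α < φ
      · exact Set.indicator_of_notMem (fun hmem => by
          rw [Set.mem_Icc] at hmem; linarith [hmem.1]) _
      · push_neg at h5
        have h5' : φ < 4 * α := lt_of_le_of_ne h5 e4
        have hm4 : -φ + 4 * α ∈ Set.Icc (0:ℝ) π := ⟨by linarith, by linarith⟩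
        have P4 : p α 3 (-φ + 4 * α) = 0 := by rw [p3_def, if_pos (by linarith)]
        simp only [Set.indicator_of_mem hm4, P4, ENNReal.ofReal_zero, mul_zero]
    simp only [Set.indicator_of_mem hm1, Set.indicator_of_mem hm2, Set.indicator_of_mem hm3,
      hI4, P1, P2, P3, ENNReal.ofReal_one, mul_one, add_zero]
    have hs1 : 0 < Real.sin (φ - 2 * α) :=
      Real.sin_pos_of_pos_of_lt_pi (by linarith) (by linarith)
    have hc1 : Real.cos (φ - 2 * α) ≠ 0 :=
      cos_ne_zero_of_Ioo (by linarith) (by linarith) (fun h => e9 (by linarith))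
    have hs2 : 0 < Real.sin (-φ + 2 * π - 4 * α) :=
      Real.sin_pos_of_pos_of_lt_pi (by linarith) (by linarith)
    have hc2' : Real.cos (-φ + 2 * π - 4 * α) ≠ 0 :=
      ne_of_lt (Real.cos_neg_of_pi_div_two_lt_of_lt (by linarith) (by linarith))
    have hs3 : 0 < Real.sin (φ + 2 * α) :=
      Real.sin_pos_of_pos_of_lt_pi (by linarith) (by linarith)
    have hv1 : 0 ≤ u α (φ - 2 * α) :=
      u_nonneg hα0 (by linarith) (by linarith) (by linarith) (fun h => e9 (by linarith))
    have hv2 : 0 ≤ u α (-φ + 2 * π - 4 * α) :=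
      u_nonneg hα0 (by linarith) (by linarith) (by linarith) (ne_of_gt (by linarith))
    have hs1nn : 0 ≤ 1 / 2 * Real.sin (φ - 2 * α) := by linarith
    have hs2nn : 0 ≤ 1 / 2 * Real.sin (-φ + 2 * π - 4 * α) := by linarith
    have hs3nn : 0 ≤ 1 / 2 * Real.sin (φ + 2 * α) := by linarith
    rw [← ENNReal.ofReal_mul hs1nn, ← ENNReal.ofReal_mul hs2nn,
      ← ENNReal.ofReal_add (mul_nonneg hs1nn hv1) (mul_nonneg hs2nn hv2),
      ← ENNReal.ofReal_add
        (add_nonneg (mul_nonneg hs1nn hv1) (mul_nonneg hs2nn hv2)) hs3nn]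
    refine congrArg ENNReal.ofReal ?_
    have t1 := u_sin (a := α) (θ := φ - 2 * α) (ne_of_gt hca) (ne_of_gt hs1) hc1
    rw [show φ - 2 * α + α = φ - α by ring] at t1
    have t2 := u_sin (a := α) (θ := -φ + 2 * π - 4 * α) (ne_of_gt hca) (ne_of_gt hs2) hc2'
    rw [show -φ + 2 * π - 4 * α + α = 2 * π - (φ + 3 * α) by ring] at t2
    apply mul_left_cancel₀ h2ca
    linear_combination (1 / 2 : ℝ) * t1 + (1 / 2 : ℝ) * t2 + CL5 α φ
  rcases lt_or_gt_of_ne e8 with hr6 | hr6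
  · -- Region R6 : π - 2α < φ < π - α
    have hm1 : φ - 2 * α ∈ Set.Icc (0:ℝ) π := ⟨by linarith, by linarith⟩
    have hm2 : -φ + 2 * π - 4 * α ∈ Set.Icc (0:ℝ) π := ⟨by linarith, by linarith⟩
    have hn3 : (φ + 2 * α) ∉ Set.Icc (0:ℝ) π := fun hmem => by
      rw [Set.mem_Icc] at hmem; linarith [hmem.2]
    have P1 : p α 0 (φ - 2 * α) = u α (φ - 2 * α) := by
      rw [p0_def, if_neg (by linarith), if_pos (by linarith)]
    have P2 : p α 1 (-φ + 2 * π - 4 * α) = u α (-φ + 2 * π - 4 * α)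
        - 2 * Real.cos (2 * α) * u (2 * α) (-φ + 2 * π - 4 * α) := by
      rw [p1_def, if_neg (by linarith), if_pos (by linarith)]
    have hI4 : (Set.Icc 0 π).indicator
        (fun θ => ENNReal.ofReal (1 / 2 * Real.sin θ) * ENNReal.ofReal (p α 3 θ))
        (-φ + 4 * α) = 0 := by
      by_cases h5 : 4 * α < φ
      · exact Set.indicator_of_notMem (fun hmem => by
          rw [Set.mem_Icc] at hmem; linarith [hmem.1]) _
      · push_neg at h5
        have h5' : φ < 4 * α := lt_of_le_of_ne h5 e4
        have hm4 : -φ + 4 * α ∈ Set.Icc (0:ℝ) π := ⟨by linarith, by linarith⟩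
        have P4 : p α 3 (-φ + 4 * α) = 0 := by rw [p3_def, if_pos (by linarith)]
        simp only [Set.indicator_of_mem hm4, P4, ENNReal.ofReal_zero, mul_zero]
    simp only [Set.indicator_of_mem hm1, Set.indicator_of_mem hm2,
      Set.indicator_of_notMem hn3, hI4, P1, P2, add_zero]
    have hs1 : 0 < Real.sin (φ - 2 * α) :=
      Real.sin_pos_of_pos_of_lt_pi (by linarith) (by linarith)
    have hc1 : Real.cos (φ - 2 * α) ≠ 0 :=
      cos_ne_zero_of_Ioo (by linarith) (by linarith) (fun h => e9 (by linarith))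
    have hs2 : 0 < Real.sin (-φ + 2 * π - 4 * α) :=
      Real.sin_pos_of_pos_of_lt_pi (by linarith) (by linarith)
    have hc2' : Real.cos (-φ + 2 * π - 4 * α) ≠ 0 :=
      ne_of_lt (Real.cos_neg_of_pi_div_two_lt_of_lt (by linarith) (by linarith))
    have hv1 : 0 ≤ u α (φ - 2 * α) :=
      u_nonneg hα0 (by linarith) (by linarith) (by linarith) (fun h => e9 (by linarith))
    have hv2 : 0 ≤ u α (-φ + 2 * π - 4 * α)
        - 2 * Real.cos (2 * α) * u (2 * α) (-φ + 2 * π - 4 * α) :=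
      combo2_nonneg hα0 hα6 (by linarith) (by linarith)
    have hs1nn : 0 ≤ 1 / 2 * Real.sin (φ - 2 * α) := by linarith
    have hs2nn : 0 ≤ 1 / 2 * Real.sin (-φ + 2 * π - 4 * α) := by linarith
    rw [← ENNReal.ofReal_mul hs1nn, ← ENNReal.ofReal_mul hs2nn,
      ← ENNReal.ofReal_add (mul_nonneg hs1nn hv1) (mul_nonneg hs2nn hv2)]
    refine congrArg ENNReal.ofReal ?_
    have t1 := u_sin (a := α) (θ := φ - 2 * α) (ne_of_gt hca) (ne_of_gt hs1) hc1
    rw [show φ - 2 * α + α = φ - α by ring] at t1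
    have t2a := u_sin (a := α) (θ := -φ + 2 * π - 4 * α) (ne_of_gt hca) (ne_of_gt hs2) hc2'
    rw [show -φ + 2 * π - 4 * α + α = 2 * π - (φ + 3 * α) by ring] at t2a
    have t2b := u_sin (a := 2 * α) (θ := -φ + 2 * π - 4 * α) (ne_of_gt hc2) (ne_of_gt hs2)
      hc2'
    rw [show -φ + 2 * π - 4 * α + 2 * α = 2 * π - (φ + 2 * α) by ring] at t2b
    apply mul_left_cancel₀ h2ca
    linear_combination (1 / 2 : ℝ) * t1 + (1 / 2 : ℝ) * t2a - Real.cos α * t2b + CL6 α φ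
  · -- Region R7 : π - α < φ < π
    have hm1 : φ - 2 * α ∈ Set.Icc (0:ℝ) π := ⟨by linarith, by linarith⟩
    have hm2 : -φ + 2 * π - 4 * α ∈ Set.Icc (0:ℝ) π := ⟨by linarith, by linarith⟩
    have hn3 : (φ + 2 * α) ∉ Set.Icc (0:ℝ) π := fun hmem => by
      rw [Set.mem_Icc] at hmem; linarith [hmem.2]
    have P1 : p α 0 (φ - 2 * α) = 2 * Real.cos (2 * α) * u (2 * α) (φ - 2 * α) := by
      rw [p0_def, if_neg (by linarith), if_neg (by linarith), if_pos (by linarith)]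
    have P2 : p α 1 (-φ + 2 * π - 4 * α) = 0 := by
      rw [p1_def, if_pos (by linarith)]
    have hI4 : (Set.Icc 0 π).indicator
        (fun θ => ENNReal.ofReal (1 / 2 * Real.sin θ) * ENNReal.ofReal (p α 3 θ))
        (-φ + 4 * α) = 0 := by
      by_cases h5 : 4 * α < φ
      · exact Set.indicator_of_notMem (fun hmem => by
          rw [Set.mem_Icc] at hmem; linarith [hmem.1]) _
      · push_neg at h5
        have h5' : φ < 4 * α := lt_of_le_of_ne h5 e4
        have hm4 : -φ + 4 * α ∈ Set.Icc (0:ℝ) π := ⟨by linarith, by linarith⟩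
        have P4 : p α 3 (-φ + 4 * α) = 0 := by rw [p3_def, if_pos (by linarith)]
        simp only [Set.indicator_of_mem hm4, P4, ENNReal.ofReal_zero, mul_zero]
    simp only [Set.indicator_of_mem hm1, Set.indicator_of_mem hm2,
      Set.indicator_of_notMem hn3, hI4, P1, P2, ENNReal.ofReal_zero, mul_zero, add_zero]
    have hs1 : 0 < Real.sin (φ - 2 * α) :=
      Real.sin_pos_of_pos_of_lt_pi (by linarith) (by linarith)
    have hc1 : Real.cos (φ - 2 * α) ≠ 0 :=
      ne_of_lt (Real.cos_neg_of_pi_div_two_lt_of_lt (by linarith) (by linarith))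
    have hv1 : 0 ≤ 2 * Real.cos (2 * α) * u (2 * α) (φ - 2 * α) :=
      mul_nonneg (by linarith)
        (u_nonneg (by linarith) (by linarith) (by linarith) (by linarith)
          (ne_of_gt (by linarith)))
    have hs1nn : 0 ≤ 1 / 2 * Real.sin (φ - 2 * α) := by linarith
    rw [← ENNReal.ofReal_mul hs1nn]
    refine congrArg ENNReal.ofReal ?_
    have t := u_sin (a := 2 * α) (θ := φ - 2 * α) (ne_of_gt hc2) (ne_of_gt hs1) hc1
    rw [show φ - 2 * α + 2 * α = φ by ring] at t
    linear_combination (1 / 2 : ℝ) * t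

end FeresAux

/-- the measure `μ(A) = (1/2)∫_A sin θ dθ` is invariant for the Feres
random map: `μ(A) = Σ_{i=1}^4 ∫_{T_i⁻¹(A)} p_i(θ) dμ(θ)` for every Borel `A ⊆ [0, π]`. -/
theorem feres_measure_invariant (α : ℝ) (hα : α ∈ Set.Ioo 0 (π / 6))
    (A : Set ℝ) (hA : MeasurableSet A) (hAsub : A ⊆ Set.Icc 0 π) :
    mu0 A = ∑ i : Fin 4, ∫⁻ θ in T α i ⁻¹' A, ENNReal.ofReal (p α i θ) ∂mu0 := by
  obtain ⟨hα0, hα6⟩ := hα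
  have hdens : Measurable fun θ : ℝ => ENNReal.ofReal (1 / 2 * Real.sin θ) :=
    (measurable_const.mul Real.continuous_sin.measurable).ennreal_ofReal
  -- Step 1 : rewrite each summand as an integral over `A`.
  have step : ∀ i : Fin 4,
      ∫⁻ θ in T α i ⁻¹' A, ENNReal.ofReal (p α i θ) ∂mu0
        = ∫⁻ φ in A, (Set.Icc 0 π).indicator
            (fun θ => ENNReal.ofReal (1 / 2 * Real.sin θ) * ENNReal.ofReal (p α i θ))
            (gmap α i φ) ∂volume := by
    intro i
    have hTm : Measurable (T α i) := (measurePreserving_T α i).measurable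
    have hTA : MeasurableSet (T α i ⁻¹' A) := hA.preimage hTm
    have hpm : Measurable fun θ => ENNReal.ofReal (p α i θ) :=
      (measurable_p α i).ennreal_ofReal
    have hG : Measurable fun θ : ℝ =>
        ENNReal.ofReal (1 / 2 * Real.sin θ) * ENNReal.ofReal (p α i θ) := hdens.mul hpm
    have hH : Measurable fun φ : ℝ => (Set.Icc 0 π).indicator
        (fun θ => ENNReal.ofReal (1 / 2 * Real.sin θ) * ENNReal.ofReal (p α i θ))
        (gmap α i φ) := (hG.indicator measurableSet_Icc).comp (measurable_gmap α i)
    have hcomp := (measurePreserving_T α i).lintegral_comp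
      (f := Set.indicator A fun φ => (Set.Icc 0 π).indicator
        (fun θ => ENNReal.ofReal (1 / 2 * Real.sin θ) * ENNReal.ofReal (p α i θ))
        (gmap α i φ)) (hH.indicator hA)
    rw [mu0, setLIntegral_withDensity_eq_setLIntegral_mul _ hdens hpm hTA,
      Measure.restrict_restrict hTA, ← lintegral_indicator (hTA.inter measurableSet_Icc),
      ← lintegral_indicator hA, ← hcomp]
    apply lintegral_congr
    intro θ
    by_cases h1 : T α i θ ∈ A <;> by_cases h2 : θ ∈ Set.Icc 0 π <;>
      · rw [Set.mem_Icc] at h2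
        simp [Set.indicator_apply, Set.mem_inter_iff, Set.mem_preimage, Set.mem_Icc, h1, h2,
          gmap_T, Pi.mul_apply]
  -- Step 2 : rewrite the left-hand side.
  have hL : mu0 A = ∫⁻ φ in A, ENNReal.ofReal (1 / 2 * Real.sin φ) ∂volume := by
    rw [mu0, withDensity_apply _ hA, Measure.restrict_restrict hA,
      Set.inter_eq_self_of_subset_left hAsub]
  simp only [step]
  rw [hL, ← lintegral_finset_sum]
  swap
  · intro i _
    exact ((hdens.mul ((measurable_p α i).ennreal_ofReal)).indicator
      measurableSet_Icc).comp (measurable_gmap α i)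
  -- Step 3 : the pointwise identity holds a.e. on `A`.
  apply lintegral_congr_ae
  have hEfin : ({0, π, α, 2 * α, 3 * α, 4 * α, π - 4 * α, π - 3 * α, π - 2 * α, π - α,
      π / 2 + 2 * α, π / 2 - 2 * α} : Set ℝ).Finite := Set.toFinite _
  have hE0 : (volume : Measure ℝ) {0, π, α, 2 * α, 3 * α, 4 * α, π - 4 * α, π - 3 * α,
      π - 2 * α, π - α, π / 2 + 2 * α, π / 2 - 2 * α} = 0 := hEfin.measure_zero _
  have hnE : ∀ᵐ φ : ℝ ∂volume.restrict A,
      φ ∉ ({0, π, α, 2 * α, 3 * α, 4 * α, π - 4 * α, π - 3 * α, π - 2 * α, π - α,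
        π / 2 + 2 * α, π / 2 - 2 * α} : Set ℝ) :=
    ae_restrict_of_ae (measure_eq_zero_iff_ae_notMem.mp hE0)
  filter_upwards [ae_restrict_mem hA, hnE] with φ hφA hφE
  simp only [Set.mem_insert_iff, Set.mem_singleton_iff, not_or] at hφE
  obtain ⟨hne0, hneπ, hne1, hne2, hne3, hne4, hne5, hne6, hne7, hne8, hne9, hne10⟩ := hφE
  have hφIcc := hAsub hφA
  have h0 : 0 < φ := lt_of_le_of_ne hφIcc.1 (Ne.symm hne0)
  have hπφ : φ < π := lt_of_le_of_ne hφIcc.2 hneπ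
  rw [Fin.sum_univ_four]
  simp only [gmap0, gmap1, gmap2, gmap3]
  exact (feres_key α φ hα0 hα6 h0 hπφ hne1 hne2 hne3 hne4 hne5 hne6 hne7 hne8
    hne9 hne10).symm
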